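/- In the setting of the orientable double cover construction: in the basis Λ_{j_1},…,Λ_{j_r}, e_{r+1} of ℤ₂^{r+1}, every vector Λ̂_i has an odd number of nonzero coordinates. Hence the manifold M(P, Λ̂) is orientable. -/

import Mathlib

/-- In the orientable double cover construction: `Λ` is a vector-colouring
with basis `B = (Λ_{j 1}, …, Λ_{j r})` of `ℤ₂^r`, `Λ i₀` has an even number of nonzero
coordinates in `B` (coordinate sum `0` in `ℤ₂`), and
`Λ̂ k = Λ k` (embedded in `ℤ₂^{r+1}` via `Fin.snoc · 0`) if `Λ k` has an odd number of
nonzero coordinates, and `Λ̂ k = Λ k + (e_{r+1} + Λ i₀)` otherwise.  Let `B'` be the basis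
`Λ_{j 1}, …, Λ_{j r}, e_{r+1}` of `ℤ₂^{r+1}`.  Then every `Λ̂ i` has an odd number of
nonzero coordinates in the basis `B'` (coordinate sum `1`), and hence `M(P, Λ̂)` is
orientable: there is an orientation parity `o` with `o (a + Λ̂ i) = o a + 1`. -/
theorem stmt_5 (m r : ℕ) (hr : 0 < r)
    (Λ : Fin m → (Fin r → ZMod 2))
    (j : Fin r → Fin m)
    (B : Module.Basis (Fin r) (ZMod 2) (Fin r → ZMod 2)) (hB : ∀ s, B s = Λ (j s))
    (i₀ : Fin m) (hi₀ : (∑ s, B.repr (Λ i₀) s) = 0)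
    (Λhat : Fin m → (Fin (r + 1) → ZMod 2))
    (hΛhat : ∀ k, Λhat k =
      if (∑ s, B.repr (Λ k) s) = 1 then Fin.snoc (Λ k) 0
      else Fin.snoc (Λ k) 0 + (Pi.single (Fin.last r) 1 + Fin.snoc (Λ i₀) 0))
    (B' : Module.Basis (Fin (r + 1)) (ZMod 2) (Fin (r + 1) → ZMod 2))
    (hB' : ∀ s : Fin r, B' s.castSucc = Fin.snoc (Λ (j s)) 0)
    (hB'last : B' (Fin.last r) = Pi.single (Fin.last r) 1) :
    (∀ i, (∑ t, B'.repr (Λhat i) t) = 1) ∧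
    (∃ o : (Fin (r + 1) → ZMod 2) → ZMod 2, ∀ a i, o (a + Λhat i) = o a + 1) := by
  -- snoc embedding as a linear map
  let L : (Fin r → ZMod 2) →ₗ[ZMod 2] (Fin (r + 1) → ZMod 2) :=
    { toFun := fun v => Fin.snoc v 0
      map_add' := by
        intro v w; funext i
        refine Fin.lastCases ?_ (fun i => ?_) i <;> simp
      map_smul' := by
        intro c v; funext i
        refine Fin.lastCases ?_ (fun i => ?_) i <;> simp }
  -- coordinate-sum linear maps
  let S' : (Fin (r + 1) → ZMod 2) →ₗ[ZMod 2] ZMod 2 :=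
    { toFun := fun x => ∑ t, B'.repr x t
      map_add' := by intro x y; simp [Finset.sum_add_distrib]
      map_smul' := by intro c x; simp [Finset.mul_sum] }
  let S : (Fin r → ZMod 2) →ₗ[ZMod 2] ZMod 2 :=
    { toFun := fun x => ∑ t, B.repr x t
      map_add' := by intro x y; simp [Finset.sum_add_distrib]
      map_smul' := by intro c x; simp [Finset.mul_sum] }
  have key : ∀ v : Fin r → ZMod 2,
      (∑ t, B'.repr (Fin.snoc v 0) t) = ∑ s, B.repr v s := by
    intro v
    have : S'.comp L = S := by
      apply B.ext
      intro s
      show (∑ t, B'.repr (Fin.snoc (B s) 0) t) = ∑ t, B.repr (B s) t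
      have e : Fin.snoc (B s) (0 : ZMod 2) = B' s.castSucc := by rw [hB s, hB' s]
      rw [e]
      simp [Module.Basis.repr_self, Finsupp.single_apply]
    have := congrFun (congrArg (fun f => f.toFun) this) v
    exact this
  have hlast : (∑ t, B'.repr (Pi.single (Fin.last r) 1) t) = 1 := by
    rw [← hB'last]
    simp [Module.Basis.repr_self, Finsupp.single_apply]
  have part1 : ∀ i, (∑ t, B'.repr (Λhat i) t) = 1 := by
    intro i
    rw [hΛhat i]
    by_cases h : (∑ s, B.repr (Λ i) s) = 1
    · rw [if_pos h, key]; exact h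
    · rw [if_neg h]
      have h0 : (∑ s, B.repr (Λ i) s) = 0 := by
        rcases (by decide : ∀ x : ZMod 2, x = 0 ∨ x = 1) (∑ s, B.repr (Λ i) s) with h'|h'
        · exact h'
        · exact absurd h' h
      simp only [map_add, Finsupp.add_apply, Finset.sum_add_distrib, key, hlast, h0, hi₀]
      ring
  refine ⟨part1, ⟨fun a => ∑ t, B'.repr a t, fun a i => ?_⟩⟩
  simp only [map_add, Finsupp.add_apply, Finset.sum_add_distrib, part1 i]
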